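/- arXiv:1810.03315 — 3 statements merged into one kernel-verified Lean document; each statement's English description precedes it below -/
import Mathlib

section
/- Let n, m be natural numbers, A an invertible real n×n matrix, B a real m×n matrix, M an invertible real m×m matrix, and γ > 0 a real number. Set X := B·A⁻¹·Bᵀ and assume X and M + γ·X are invertible. Then the augmented matrix A_γ := A + γ·Bᵀ·M⁻¹·B is invertible, the Schur complement S := −B·A_γ⁻¹·Bᵀ of the augmented saddle point matrix is invertible, and its inverse satisfies the exact identity S⁻¹ = −(B·A⁻¹·Bᵀ)⁻¹ − γ·M⁻¹. -/
open Matrix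

/-- The Schur complement `S = -B A_γ⁻¹ Bᵀ` of the augmented saddle point matrix
is invertible with `S⁻¹ = -(B A⁻¹ Bᵀ)⁻¹ - γ M⁻¹`. -/
theorem stmt_2 (n m : ℕ) (A : Matrix (Fin n) (Fin n) ℝ)
    (B : Matrix (Fin m) (Fin n) ℝ) (M : Matrix (Fin m) (Fin m) ℝ)
    (γ : ℝ) (hγ : 0 < γ) (hA : IsUnit A) (hM : IsUnit M)
    (hX : IsUnit (B * A⁻¹ * Bᵀ)) (hMX : IsUnit (M + γ • (B * A⁻¹ * Bᵀ))) :
    IsUnit (A + γ • (Bᵀ * M⁻¹ * B)) ∧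
      IsUnit (-(B * (A + γ • (Bᵀ * M⁻¹ * B))⁻¹ * Bᵀ)) ∧
      (-(B * (A + γ • (Bᵀ * M⁻¹ * B))⁻¹ * Bᵀ))⁻¹
        = -(B * A⁻¹ * Bᵀ)⁻¹ - γ • M⁻¹ := by
  have hγ0 : γ ≠ 0 := ne_of_gt hγ
  set X := B * A⁻¹ * Bᵀ with hXdef
  have hMdet : IsUnit M.det := (Matrix.isUnit_iff_isUnit_det M).mp hM
  have hMinv : IsUnit M⁻¹ := by
    rw [Matrix.isUnit_iff_isUnit_det, Matrix.det_nonsing_inv]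
    exact hMdet.ringInverse
  have hC : IsUnit (γ • M⁻¹) := by
    rw [Matrix.isUnit_iff_isUnit_det, Matrix.det_smul]
    exact ((isUnit_iff_ne_zero.mpr (pow_ne_zero _ hγ0)).mul
      ((Matrix.isUnit_iff_isUnit_det _).mp hMinv))
  haveI : Invertible γ := (isUnit_iff_ne_zero.mpr hγ0).invertible
  have hCinv : (γ • M⁻¹)⁻¹ = γ⁻¹ • M := by
    rw [Matrix.inv_smul γ (A := M⁻¹) ((Matrix.isUnit_iff_isUnit_det _).mp hMinv),
      Matrix.nonsing_inv_nonsing_inv M hMdet, invOf_eq_inv]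
  have hKeq : γ⁻¹ • M + X = γ⁻¹ • (M + γ • X) := by
    rw [smul_add, smul_smul, inv_mul_cancel₀ hγ0, one_smul]
  have hK : IsUnit (γ⁻¹ • M + X) := by
    rw [hKeq, Matrix.isUnit_iff_isUnit_det, Matrix.det_smul]
    exact (isUnit_iff_ne_zero.mpr (pow_ne_zero _ (inv_ne_zero hγ0))).mul
      ((Matrix.isUnit_iff_isUnit_det _).mp hMX)
  have hrw : γ • (Bᵀ * M⁻¹ * B) = Bᵀ * (γ • M⁻¹) * B := by
    rw [Matrix.mul_smul, Matrix.smul_mul]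
  -- invertibility of the augmented matrix
  have hAγ : IsUnit (A + γ • (Bᵀ * M⁻¹ * B)) := by
    rw [hrw]
    obtain ⟨_⟩ := hA.nonempty_invertible
    obtain ⟨_⟩ := hC.nonempty_invertible
    have h1 : IsUnit (⅟(γ • M⁻¹) + B * ⅟A * Bᵀ) := by
      rw [invOf_eq_nonsing_inv, invOf_eq_nonsing_inv, hCinv]
      exact hK
    obtain ⟨_⟩ := h1.nonempty_invertible
    haveI := Matrix.invertibleAddMulMul A Bᵀ (γ • M⁻¹) B
    exact isUnit_of_invertible _
  refine ⟨hAγ, ?_⟩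
  set K := γ⁻¹ • M + X with hKdef
  -- Woodbury identity
  have hWood : (A + γ • (Bᵀ * M⁻¹ * B))⁻¹
      = A⁻¹ - A⁻¹ * Bᵀ * K⁻¹ * B * A⁻¹ := by
    rw [hrw, Matrix.add_mul_mul_inv_eq_sub A Bᵀ (γ • M⁻¹) B hA hC (by rw [hCinv]; exact hK),
      hCinv]
  have hKK : K⁻¹ * K = 1 := Matrix.nonsing_inv_mul K ((Matrix.isUnit_iff_isUnit_det K).mp hK)
  have hKK' : K * K⁻¹ = 1 := Matrix.mul_nonsing_inv K ((Matrix.isUnit_iff_isUnit_det K).mp hK)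
  have hXi : X⁻¹ * X = 1 := Matrix.nonsing_inv_mul X ((Matrix.isUnit_iff_isUnit_det X).mp hX)
  have hXi' : X * X⁻¹ = 1 := Matrix.mul_nonsing_inv X ((Matrix.isUnit_iff_isUnit_det X).mp hX)
  have hMM : M⁻¹ * M = 1 := Matrix.nonsing_inv_mul M hMdet
  have hMM' : M * M⁻¹ = 1 := Matrix.mul_nonsing_inv M hMdet
  -- the Schur complement in product form
  have hSchur : B * (A + γ • (Bᵀ * M⁻¹ * B))⁻¹ * Bᵀ = X * K⁻¹ * (γ⁻¹ • M) := by
    rw [hWood]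
    have h1 : B * (A⁻¹ - A⁻¹ * Bᵀ * K⁻¹ * B * A⁻¹) * Bᵀ = X - X * K⁻¹ * X := by
      simp only [Matrix.mul_sub, Matrix.sub_mul, hXdef, Matrix.mul_assoc]
    rw [h1]
    calc X - X * K⁻¹ * X = X * K⁻¹ * K - X * K⁻¹ * X := by
          rw [Matrix.mul_assoc X K⁻¹ K, hKK, Matrix.mul_one]
      _ = X * K⁻¹ * (K - X) := by rw [Matrix.mul_sub]
      _ = X * K⁻¹ * (γ⁻¹ • M) := by rw [hKdef]; congr 1; abel
  -- the candidate inverse in product form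
  have hT : (γ • M⁻¹) * K * X⁻¹ = X⁻¹ + γ • M⁻¹ := by
    rw [hKdef]
    simp only [Matrix.mul_add, Matrix.add_mul, Matrix.smul_mul, Matrix.mul_smul, smul_smul,
      mul_inv_cancel₀ hγ0, inv_mul_cancel₀ hγ0, one_smul, hMM, Matrix.one_mul, Matrix.mul_assoc, hXi',
      Matrix.mul_one]
  have hprod : (X * K⁻¹ * (γ⁻¹ • M)) * ((γ • M⁻¹) * K * X⁻¹) = 1 := by
    have h2 : (γ⁻¹ • M) * (γ • M⁻¹) = 1 := by
      rw [Matrix.smul_mul, Matrix.mul_smul, smul_smul, inv_mul_cancel₀ hγ0, one_smul, hMM']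
    calc (X * K⁻¹ * (γ⁻¹ • M)) * ((γ • M⁻¹) * K * X⁻¹)
        = X * K⁻¹ * ((γ⁻¹ • M) * (γ • M⁻¹)) * K * X⁻¹ := by
          simp only [Matrix.mul_assoc]
      _ = 1 := by rw [h2, Matrix.mul_one, Matrix.mul_assoc X K⁻¹ K, hKK, Matrix.mul_one, hXi']
  have hS : -(B * (A + γ • (Bᵀ * M⁻¹ * B))⁻¹ * Bᵀ) = -(X * K⁻¹ * (γ⁻¹ • M)) := by
    rw [hSchur]
  rw [hS]
  have hone : (-(X * K⁻¹ * (γ⁻¹ • M))) * (-(X⁻¹ + γ • M⁻¹)) = 1 := by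
    rw [Matrix.neg_mul, Matrix.mul_neg, neg_neg, ← hT, hprod]
  constructor
  · exact ⟨⟨_, _, hone, mul_eq_one_comm.mp hone⟩, rfl⟩
  · rw [Matrix.inv_eq_right_inv hone]
    rw [neg_add]
    abel
end

section
/- Let n, m be natural numbers with m ≤ n, let A be a real symmetric positive definite n×n matrix, M a real symmetric positive definite m×m matrix, and B a real m×n matrix of full row rank m. Then for every γ > 0 the augmented matrix A_γ := A + γ·Bᵀ·M⁻¹·B is invertible, the Schur complement S_γ := −B·A_γ⁻¹·Bᵀ is invertible, and γ⁻¹·S_γ⁻¹ converges to −M⁻¹ as γ → ∞; that is, the approximation S_γ⁻¹ ≈ −(ν + γ)·M⁻¹ of the Schur complement inverse becomes exact to leading order in γ as γ increases. -/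
open Matrix Filter

private lemma aux_smul_posDef {m : ℕ} {P : Matrix (Fin m) (Fin m) ℝ} (hP : P.PosDef)
    {c : ℝ} (hc : 0 < c) : (c • P).PosDef := by
  refine ⟨?_, fun x hx => ?_⟩
  · unfold Matrix.IsHermitian
    rw [conjTranspose_smul, star_trivial, hP.1.eq]
  · exact (hP.smul hc).2 hx

private lemma aux_smul_posSemidef {m : ℕ} {P : Matrix (Fin m) (Fin m) ℝ} (hP : P.PosSemidef)
    {c : ℝ} (hc : 0 ≤ c) : (c • P).PosSemidef := by
  refine ⟨?_, fun x => ?_⟩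
  · unfold Matrix.IsHermitian
    rw [conjTranspose_smul, star_trivial, hP.1.eq]
  · exact (hP.smul hc).2 x

private lemma aux_inj {n m : ℕ} {B : Matrix (Fin m) (Fin n) ℝ} (hB : B.rank = m) :
    Function.Injective (Bᵀ.mulVec) := by
  rw [← Matrix.coe_mulVecLin Bᵀ, ← LinearMap.ker_eq_bot]
  have h2 := LinearMap.finrank_range_add_finrank_ker (Bᵀ.mulVecLin)
  have hr : Module.finrank ℝ (LinearMap.range Bᵀ.mulVecLin) = m := by
    have h := Matrix.rank_transpose B
    rw [hB] at h
    exact h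
  rw [hr, Module.finrank_fin_fun] at h2
  have h0 : Module.finrank ℝ (LinearMap.ker Bᵀ.mulVecLin) = 0 := by omega
  exact Submodule.finrank_eq_zero.mp h0

private lemma aux_conj {n m : ℕ} {B : Matrix (Fin m) (Fin n) ℝ}
    (hinj : Function.Injective (Bᵀ.mulVec)) {P : Matrix (Fin n) (Fin n) ℝ} (hP : P.PosDef) :
    (B * P * Bᵀ).PosDef := by
  have hrw : B * P * Bᵀ = (Bᵀ)ᴴ * P * Bᵀ := by
    rw [conjTranspose_eq_transpose_of_trivial, transpose_transpose]
  rw [hrw]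
  refine Matrix.PosDef.of_dotProduct_mulVec_pos (Matrix.isHermitian_conjTranspose_mul_mul Bᵀ hP.1) fun x hx => ?_
  have hBx : Bᵀ *ᵥ x ≠ 0 := fun h => hx (hinj (by rw [h, Matrix.mulVec_zero]))
  simpa only [star_mulVec, dotProduct_mulVec, vecMul_vecMul] using hP.dotProduct_mulVec_pos hBx

set_option maxHeartbeats 1000000 in
/-- For SPD `A` and `M` and full-row-rank `B`, for every `γ > 0` the augmented
matrix `A_γ = A + γ Bᵀ M⁻¹ B` and the Schur complement `S_γ = -B A_γ⁻¹ Bᵀ`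
are invertible, and `γ⁻¹ S_γ⁻¹ → -M⁻¹` as `γ → ∞`. -/
theorem stmt_3 (n m : ℕ) (hmn : m ≤ n)
    (A : Matrix (Fin n) (Fin n) ℝ) (M : Matrix (Fin m) (Fin m) ℝ)
    (B : Matrix (Fin m) (Fin n) ℝ)
    (hA : A.PosDef) (hM : M.PosDef) (hB : B.rank = m) :
    (∀ γ : ℝ, 0 < γ →
        IsUnit (A + γ • (Bᵀ * M⁻¹ * B)) ∧
          IsUnit (-(B * (A + γ • (Bᵀ * M⁻¹ * B))⁻¹ * Bᵀ))) ∧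
      Tendsto (fun γ : ℝ => γ⁻¹ • (-(B * (A + γ • (Bᵀ * M⁻¹ * B))⁻¹ * Bᵀ))⁻¹)
        atTop (nhds (-M⁻¹)) := by
  classical
  have hinj : Function.Injective (Bᵀ.mulVec) := aux_inj hB
  obtain ⟨C, hCdef⟩ : ∃ C : Matrix (Fin m) (Fin m) ℝ, C = B * A⁻¹ * Bᵀ := ⟨_, rfl⟩
  have hC : C.PosDef := by rw [hCdef]; exact aux_conj hinj hA.inv
  have hAdet : IsUnit A.det := (Matrix.isUnit_iff_isUnit_det A).mp hA.isUnit
  have hMdet : IsUnit M.det := (Matrix.isUnit_iff_isUnit_det M).mp hM.isUnit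
  have hCdet : IsUnit C.det := (Matrix.isUnit_iff_isUnit_det C).mp hC.isUnit
  have hXps : ∀ γ : ℝ, 0 < γ → (γ • (Bᵀ * M⁻¹ * B)).PosSemidef := by
    intro γ hγ
    have h2 : (Bᵀ * M⁻¹ * B).PosSemidef := by
      have h1 := hM.inv.posSemidef.conjTranspose_mul_mul_same B
      simpa [Matrix.conjTranspose_eq_transpose_of_trivial] using h1
    exact aux_smul_posSemidef h2 hγ.le
  have hAγ : ∀ γ : ℝ, 0 < γ → (A + γ • (Bᵀ * M⁻¹ * B)).PosDef := by
    intro γ hγ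
    exact hA.add_posSemidef (hXps γ hγ)
  have hD : ∀ γ : ℝ, 0 < γ → (M + γ • C).PosDef := by
    intro γ hγ
    exact hM.add (aux_smul_posDef hC hγ)
  -- key identity : B A_γ⁻¹ Bᵀ = C (M + γC)⁻¹ M
  have key2 : ∀ γ : ℝ, 0 < γ →
      B * (A + γ • (Bᵀ * M⁻¹ * B))⁻¹ * Bᵀ = C * ((M + γ • C)⁻¹ * M) := by
    intro γ hγ
    have hAγdet : IsUnit (A + γ • (Bᵀ * M⁻¹ * B)).det :=
      (Matrix.isUnit_iff_isUnit_det _).mp (hAγ γ hγ).isUnit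
    have hDdet : IsUnit (M + γ • C).det :=
      (Matrix.isUnit_iff_isUnit_det _).mp (hD γ hγ).isUnit
    have key1 : (A + γ • (Bᵀ * M⁻¹ * B)) * (A⁻¹ * (Bᵀ * ((M + γ • C)⁻¹ * M))) = Bᵀ := by
      rw [Matrix.add_mul, Matrix.mul_nonsing_inv_cancel_left A _ hAdet, Matrix.smul_mul]
      have e1 : (Bᵀ * M⁻¹ * B) * (A⁻¹ * (Bᵀ * ((M + γ • C)⁻¹ * M)))
          = Bᵀ * (M⁻¹ * (C * ((M + γ • C)⁻¹ * M))) := by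
        rw [hCdef]
        simp only [Matrix.mul_assoc]
      rw [e1]
      have e2 : Bᵀ * ((M + γ • C)⁻¹ * M) + γ • (Bᵀ * (M⁻¹ * (C * ((M + γ • C)⁻¹ * M))))
          = Bᵀ * (M⁻¹ * ((M + γ • C) * ((M + γ • C)⁻¹ * M))) := by
        rw [Matrix.add_mul, Matrix.mul_add, Matrix.mul_add, Matrix.smul_mul,
          ← Matrix.mul_assoc M⁻¹ M _, Matrix.nonsing_inv_mul M hMdet, Matrix.one_mul,
          Matrix.mul_smul, Matrix.mul_smul]
      rw [e2, Matrix.mul_nonsing_inv_cancel_left _ _ hDdet,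
        Matrix.nonsing_inv_mul M hMdet, Matrix.mul_one]
    have h5 : (A + γ • (Bᵀ * M⁻¹ * B))⁻¹ *
          ((A + γ • (Bᵀ * M⁻¹ * B)) * (A⁻¹ * (Bᵀ * ((M + γ • C)⁻¹ * M))))
        = (A + γ • (Bᵀ * M⁻¹ * B))⁻¹ * Bᵀ := by rw [key1]
    rw [Matrix.nonsing_inv_mul_cancel_left _ _ hAγdet] at h5
    rw [Matrix.mul_assoc, ← h5, hCdef]
    simp only [Matrix.mul_assoc]
  -- inverse of the Schur complement
  have key3 : ∀ γ : ℝ, 0 < γ →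
      (-(B * (A + γ • (Bᵀ * M⁻¹ * B))⁻¹ * Bᵀ))⁻¹ = -(C⁻¹ + γ • M⁻¹) := by
    intro γ hγ
    have hDdet : IsUnit (M + γ • C).det :=
      (Matrix.isUnit_iff_isUnit_det _).mp (hD γ hγ).isUnit
    rw [key2 γ hγ]
    apply Matrix.inv_eq_right_inv
    rw [neg_mul_neg]
    have e3 : M * (C⁻¹ + γ • M⁻¹) = (M + γ • C) * C⁻¹ := by
      rw [Matrix.mul_add, Matrix.add_mul, Matrix.mul_smul, Matrix.smul_mul,
        Matrix.mul_nonsing_inv M hMdet, Matrix.mul_nonsing_inv C hCdet]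
    rw [Matrix.mul_assoc C ((M + γ • C)⁻¹ * M) (C⁻¹ + γ • M⁻¹),
      Matrix.mul_assoc (M + γ • C)⁻¹ M (C⁻¹ + γ • M⁻¹), e3,
      ← Matrix.mul_assoc (M + γ • C)⁻¹ (M + γ • C) C⁻¹,
      Matrix.nonsing_inv_mul _ hDdet, Matrix.one_mul,
      Matrix.mul_nonsing_inv C hCdet]
  constructor
  · intro γ hγ
    refine ⟨(hAγ γ hγ).isUnit, ?_⟩
    rw [key2 γ hγ]
    exact (hC.isUnit.mul ((hD γ hγ).inv.isUnit.mul hM.isUnit)).neg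
  · have h0 := (tendsto_inv_atTop_zero (𝕜 := ℝ)).smul_const (C⁻¹ : Matrix (Fin m) (Fin m) ℝ)
    rw [zero_smul] at h0
    have hlim : Tendsto (fun γ : ℝ => -(γ⁻¹ • C⁻¹ + M⁻¹)) atTop (nhds (-M⁻¹)) := by
      have h1 := (h0.add_const (M⁻¹ : Matrix (Fin m) (Fin m) ℝ)).neg
      rw [zero_add] at h1
      exact h1
    refine hlim.congr' ?_
    filter_upwards [eventually_gt_atTop (0 : ℝ)] with γ hγ
    rw [key3 γ hγ, smul_neg, smul_add, smul_smul, inv_mul_cancel₀ hγ.ne', one_smul]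
end

section
/- Let T ⊂ ℝ² be the reference triangle with vertices (0,0), (1,0), (0,1), and let B(x, y) = 27·x·y·(1 − x − y) be its cubic bubble normalized to 1 at the barycenter. Consider the uniform refinement of T into the four subtriangles T₀ = conv{(½,0), (0,½), (½,½)} (the middle triangle), T₁ = conv{(0,0), (½,0), (0,½)}, T₂ = conv{(1,0), (½,0), (½,½)}, T₃ = conv{(0,1), (0,½), (½,½)}, and for each i let B_i = 27·μ₁·μ₂·μ₃ be the bubble of T_i (with μ₁, μ₂, μ₃ the barycentric coordinates of T_i), normalized to 1 at the barycenter of T_i. Then: (a) the coarse bubble takes value 1 at the barycenter of the middle subtriangle and value ½ at the barycenters of the three corner subtriangles, i.e. B(1/3, 1/3) = 1 and B(1/6, 1/6) = B(2/3, 1/6) = B(1/6, 2/3) = ½; and (b) the interpolant built from the fine bubbles with these coefficients loses 3/8 of the integral: ∫_{T₀} B₀ + ½·(∫_{T₁} B₁ + ∫_{T₂} B₂ + ∫_{T₃} B₃) = (5/8)·∫_T B. -/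
open MeasureTheory

private noncomputable def amap (c : ℝ) (v : ℝ × ℝ) : (ℝ × ℝ) →ᵃ[ℝ] (ℝ × ℝ) where
  toFun p := v + c • p
  linear := c • LinearMap.id
  map_vadd' p w := by
    simp [smul_add]
    abel

lemma aux_hull (c : ℝ) (v a b d : ℝ × ℝ) :
    (fun p : ℝ × ℝ => v + c • p) '' convexHull ℝ {a, b, d}
      = convexHull ℝ {v + c • a, v + c • b, v + c • d} := by
  have : (fun p : ℝ × ℝ => v + c • p) = ⇑(amap c v) := rfl
  rw [this, AffineMap.image_convexHull]
  simp [Set.image_insert_eq, amap]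

lemma aux_det (c : ℝ) : (c • ContinuousLinearMap.id ℝ (ℝ × ℝ)).det = c ^ 2 := by
  simp [ContinuousLinearMap.det, LinearMap.det_smul]

lemma aux_int (c : ℝ) (hc : c ≠ 0) (v : ℝ × ℝ) (s : Set (ℝ × ℝ)) (hs : MeasurableSet s)
    (g : ℝ × ℝ → ℝ) :
    ∫ p in s, g (v + c • p) = (c ^ 2)⁻¹ * ∫ p in (fun p : ℝ × ℝ => v + c • p) '' s, g p := by
  have hf' : ∀ x ∈ s, HasFDerivWithinAt (fun p : ℝ × ℝ => v + c • p)
      (c • ContinuousLinearMap.id ℝ (ℝ × ℝ)) s x := by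
    intro x hx
    exact (((hasFDerivAt_id x).const_smul c).const_add v).hasFDerivWithinAt
  have hinj : Set.InjOn (fun p : ℝ × ℝ => v + c • p) s := by
    intro a _ b _ h
    simpa [hc, smul_right_injective] using smul_right_injective (ℝ × ℝ) hc
      (by simpa using (add_right_injective v h))
  have := integral_image_eq_integral_abs_det_fderiv_smul volume hs hf' hinj g
  rw [this]
  have hcd : |(c • ContinuousLinearMap.id ℝ (ℝ × ℝ)).det| = c ^ 2 := by
    rw [aux_det]; exact abs_of_nonneg (sq_nonneg c)
  simp only [hcd, smul_eq_mul, integral_const_mul]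
  field_simp

lemma aux_meas (a b d : ℝ × ℝ) : MeasurableSet (convexHull ℝ {a, b, d}) :=
  ((Set.toFinite _).isCompact_convexHull ℝ).measurableSet


/-- (a) The coarse cubic bubble of the reference triangle takes value `1` at
the barycenter of the middle subtriangle of the uniform refinement and value
`½` at the barycenters of the three corner subtriangles; (b) the interpolant
built from the fine-grid bubbles with these coefficients retains exactly `5/8`
of the integral of the coarse bubble.  Here `B` is the coarse bubble and
`B₀, B₁, B₂, B₃` are the bubbles of the four subtriangles (27 times the
product of the respective barycentric coordinates, normalized to `1` at the
barycenters). -/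
theorem stmt_11
    (B B₀ B₁ B₂ B₃ : ℝ → ℝ → ℝ)
    -- coarse bubble of T = conv{(0,0),(1,0),(0,1)}
    (hB : ∀ x y, B x y = 27 * (x * y * (1 - x - y)))
    -- bubble of the middle subtriangle T₀ = conv{(½,0),(0,½),(½,½)},
    -- whose barycentric coordinates are 1−2y, 1−2x, 2x+2y−1
    (hB₀ : ∀ x y, B₀ x y = 27 * ((1 - 2*y) * (1 - 2*x) * (2*x + 2*y - 1)))
    -- bubble of T₁ = conv{(0,0),(½,0),(0,½)}, barycentric coords 1−2x−2y, 2x, 2y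
    (hB₁ : ∀ x y, B₁ x y = 27 * ((1 - 2*x - 2*y) * (2*x) * (2*y)))
    -- bubble of T₂ = conv{(1,0),(½,0),(½,½)}, barycentric coords 2x−1, 2−2x−2y, 2y
    (hB₂ : ∀ x y, B₂ x y = 27 * ((2*x - 1) * (2 - 2*x - 2*y) * (2*y)))
    -- bubble of T₃ = conv{(0,1),(0,½),(½,½)}, barycentric coords 2y−1, 2−2x−2y, 2x
    (hB₃ : ∀ x y, B₃ x y = 27 * ((2*y - 1) * (2 - 2*x - 2*y) * (2*x))) :
    -- (a) values of the coarse bubble at the barycenters of the subtriangles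
    (B (1/3) (1/3) = 1 ∧ B (1/6) (1/6) = 1/2 ∧ B (2/3) (1/6) = 1/2 ∧
      B (1/6) (2/3) = 1/2) ∧
    -- (b) the interpolant loses 3/8 of the integral
    ((∫ z in convexHull ℝ ({(1/2, 0), (0, 1/2), (1/2, 1/2)} : Set (ℝ × ℝ)),
          B₀ z.1 z.2)
      + (1/2) *
        ((∫ z in convexHull ℝ ({(0, 0), (1/2, 0), (0, 1/2)} : Set (ℝ × ℝ)),
            B₁ z.1 z.2)
          + (∫ z in convexHull ℝ ({(1, 0), (1/2, 0), (1/2, 1/2)} : Set (ℝ × ℝ)),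
              B₂ z.1 z.2)
          + (∫ z in convexHull ℝ ({(0, 1), (0, 1/2), (1/2, 1/2)} : Set (ℝ × ℝ)),
              B₃ z.1 z.2))
      = (5/8) *
          ∫ z in convexHull ℝ ({(0, 0), (1, 0), (0, 1)} : Set (ℝ × ℝ)),
            B z.1 z.2) := by
  constructor
  · refine ⟨?_, ?_, ?_, ?_⟩ <;> rw [hB] <;> norm_num
  set g : ℝ × ℝ → ℝ := fun p => B p.1 p.2 with hg
  set T : Set (ℝ × ℝ) := convexHull ℝ {(0, 0), (1, 0), (0, 1)} with hT
  have key : ∀ (c : ℝ) (hc : c ≠ 0) (v a b d : ℝ × ℝ) (f : ℝ → ℝ → ℝ),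
      (∀ z : ℝ × ℝ, f z.1 z.2 = g (v + c • z)) →
      ({v + c • a, v + c • b, v + c • d} : Set (ℝ × ℝ)) = {(0, 0), (1, 0), (0, 1)} →
      (∫ z in convexHull ℝ {a, b, d}, f z.1 z.2)
        = (c ^ 2)⁻¹ * ∫ z in T, g z := by
    intro c hc v a b d f hf hset
    have h1 : (fun z : ℝ × ℝ => f z.1 z.2) = fun z => g (v + c • z) := funext hf
    rw [h1, aux_int c hc v _ (aux_meas a b d) g, aux_hull, hset, ← hT]
  have e0 := key (-2) (by norm_num) (1, 1) (1/2, 0) (0, 1/2) (1/2, 1/2) B₀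
    (by intro z; simp only [hg, hB₀, hB, Prod.fst_add, Prod.snd_add, Prod.smul_fst,
          Prod.smul_snd, smul_eq_mul]; ring)
    (by norm_num [Prod.ext_iff, Prod.smul_mk, Set.ext_iff] <;> tauto)
  have e1 := key 2 (by norm_num) (0, 0) (0, 0) (1/2, 0) (0, 1/2) B₁
    (by intro z; simp only [hg, hB₁, hB, Prod.fst_add, Prod.snd_add, Prod.smul_fst,
          Prod.smul_snd, smul_eq_mul]; ring)
    (by norm_num [Prod.ext_iff, Prod.smul_mk, Set.ext_iff] <;> tauto)
  have e2 := key 2 (by norm_num) (-1, 0) (1, 0) (1/2, 0) (1/2, 1/2) B₂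
    (by intro z; simp only [hg, hB₂, hB, Prod.fst_add, Prod.snd_add, Prod.smul_fst,
          Prod.smul_snd, smul_eq_mul]; ring)
    (by norm_num [Prod.ext_iff, Prod.smul_mk, Set.ext_iff] <;> tauto)
  have e3 := key 2 (by norm_num) (0, -1) (0, 1) (0, 1/2) (1/2, 1/2) B₃
    (by intro z; simp only [hg, hB₃, hB, Prod.fst_add, Prod.snd_add, Prod.smul_fst,
          Prod.smul_snd, smul_eq_mul]; ring)
    (by norm_num [Prod.ext_iff, Prod.smul_mk, Set.ext_iff] <;> tauto)
  rw [e0, e1, e2, e3]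
  have : (∫ z in T, g z) = ∫ z in convexHull ℝ ({(0, 0), (1, 0), (0, 1)} : Set (ℝ × ℝ)),
      B z.1 z.2 := rfl
  rw [this]
  ring
end
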